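/- Relative to the sorted basis of Grassmann monomials, the matrix of the left multiplication operator L_{Tp_ε(u)} is the transpose of the matrix of L_u: [L_u]^T = [L_{Tp_ε(u)}], for every u ∈ Cl(V,Q). -/

import Mathlib

noncomputable section
open CliffordAlgebra

/-- The quadratic form `Q(x) = ε₁x₁² + ⋯ + εₙxₙ²`. -/
def Qe {n : ℕ} (ε : Fin n → ℝ) : QuadraticForm ℝ (Fin n → ℝ) :=
  QuadraticMap.weightedSumSquares ℝ ε

/-- The orthonormal generators `eᵢ` of `Cl(V,Q)`, with `eᵢ² = εᵢ`. -/
def gen {n : ℕ} (ε : Fin n → ℝ) (i : Fin n) : CliffordAlgebra (Qe ε) :=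
  ι (Qe ε) (Pi.single i 1)

/-- The basis monomial `e_I = e_{i₁}⋯e_{iₛ}`, `i₁ < ⋯ < iₛ` the elements of `I`. -/
def eProd {n : ℕ} (ε : Fin n → ℝ) (I : Finset (Fin n)) : CliffordAlgebra (Qe ε) :=
  ((I.sort (· ≤ ·)).map (gen ε)).prod

namespace Stmt12Aux

variable {n : ℕ} (ε : Fin n → ℝ)

lemma gen_sq (i : Fin n) : gen ε i * gen ε i = algebraMap ℝ _ (ε i) := by
  rw [gen, ι_sq_scalar]
  congr 1
  simp [Qe, QuadraticMap.weightedSumSquares_apply, Pi.single_apply]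

lemma gen_comm {i j : Fin n} (h : i ≠ j) :
    gen ε i * gen ε j = - (gen ε j * gen ε i) := by
  have := ι_mul_ι_add_swap (Q := Qe ε) (Pi.single i 1) (Pi.single j 1)
  have hp : QuadraticMap.polar (⇑(Qe ε)) (Pi.single i (1:ℝ)) (Pi.single j 1) = 0 := by
    simp only [QuadraticMap.polar, Qe, QuadraticMap.weightedSumSquares_apply]
    rw [← Finset.sum_sub_distrib, ← Finset.sum_sub_distrib]
    apply Finset.sum_eq_zero
    intro k _
    by_cases hk : k = i
    · subst hk; simp [Pi.single_apply, h.symm]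
    · by_cases hk' : k = j
      · subst hk'; simp [Pi.single_apply, Ne.symm h, hk]
      · simp [Pi.single_apply, hk, hk']
  rw [hp, map_zero] at this
  rw [gen, gen]
  linear_combination (norm := noncomm_ring) this

lemma symm1 {i : Fin n} {S : Finset (Fin n)} (h : i ∉ S) : symmDiff {i} S = insert i S := by
  ext a; simp only [Finset.mem_symmDiff, Finset.mem_singleton, Finset.mem_insert]
  constructor
  · rintro (⟨rfl, -⟩ | ⟨hm, hne⟩); · exact Or.inl rfl
    · exact Or.inr hm
  · rintro (rfl | hm); · exact Or.inl ⟨rfl, h⟩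
    · exact Or.inr ⟨hm, fun hh => h (hh ▸ hm)⟩

lemma symm2 {i : Fin n} {S : Finset (Fin n)} (h : i ∉ S) : symmDiff {i} (insert i S) = S := by
  ext a; simp only [Finset.mem_symmDiff, Finset.mem_singleton, Finset.mem_insert]
  constructor
  · rintro (⟨rfl, hm⟩ | ⟨hm, hne⟩)
    · exact absurd (Or.inl rfl) hm
    · rcases hm with rfl | hm; · exact absurd rfl hne
      · exact hm
  · intro hm
    exact Or.inr ⟨Or.inr hm, fun hh => h (hh ▸ hm)⟩

lemma symm3 {i j : Fin n} {S : Finset (Fin n)} (hij : j ≠ i) (h : j ∉ S) :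
    insert j (symmDiff {i} S) = symmDiff {i} (insert j S) := by
  ext a
  simp only [Finset.mem_insert, Finset.mem_symmDiff, Finset.mem_singleton]
  constructor
  · rintro (rfl | ⟨rfl, hm⟩ | ⟨hm, hne⟩)
    · exact Or.inr ⟨Or.inl rfl, hij⟩
    · exact Or.inl ⟨rfl, fun hh => by rcases hh with rfl | hh; exacts [hij rfl, hm hh]⟩
    · exact Or.inr ⟨Or.inr hm, hne⟩
  · rintro (⟨rfl, hm⟩ | ⟨hm, hne⟩)
    · exact Or.inr (Or.inl ⟨rfl, fun hh => hm (Or.inr hh)⟩)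
    · rcases hm with rfl | hm
      · exact Or.inl rfl
      · exact Or.inr (Or.inr ⟨hm, hne⟩)

/-- multiplying a sorted product of generators by a single generator. -/
lemma gen_mul_prod (i : Fin n) :
    ∀ (l : List (Fin n)), l.Pairwise (· < ·) →
    ∃ (c : ℝ) (l' : List (Fin n)), l'.Pairwise (· < ·) ∧
      l'.toFinset = symmDiff {i} l.toFinset ∧
      gen ε i * ((l.map (gen ε)).prod) = c • ((l'.map (gen ε)).prod) := by
  intro l
  induction l with
  | nil =>
    intro _
    exact ⟨1, [i], by simp, by simp [symm1], by simp⟩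
  | cons j t ih =>
    intro hs
    rw [List.pairwise_cons] at hs
    obtain ⟨hj, hts⟩ := hs
    have hjt : j ∉ t.toFinset := by
      simp only [List.mem_toFinset]; intro hm; exact absurd (hj j hm) (lt_irrefl j)
    rcases eq_or_ne i j with rfl | hij
    · refine ⟨ε i, t, hts, ?_, ?_⟩
      · rw [List.toFinset_cons, symm2 hjt]
      · rw [List.map_cons, List.prod_cons, ← mul_assoc, gen_sq, Algebra.smul_def]
    · rcases lt_or_gt_of_ne hij with hlt | hgt
      · refine ⟨1, i :: j :: t, ?_, ?_, by simp⟩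
        · rw [List.pairwise_cons]
          refine ⟨?_, List.pairwise_cons.mpr ⟨hj, hts⟩⟩
          intro b hb
          rcases List.mem_cons.mp hb with rfl | hb
          · exact hlt
          · exact hlt.trans (hj b hb)
        · rw [List.toFinset_cons, List.toFinset_cons, symm1]
          simp only [Finset.mem_insert, List.mem_toFinset]
          rintro (rfl | hm)
          · exact hij rfl
          · exact absurd (hlt.trans (hj i hm)) (lt_irrefl i)
      · obtain ⟨c, l', hl's, hl'f, hl'e⟩ := ih hts
        refine ⟨-c, j :: l', ?_, ?_, ?_⟩
        · rw [List.pairwise_cons]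
          refine ⟨?_, hl's⟩
          intro b hb
          have : b ∈ l'.toFinset := List.mem_toFinset.mpr hb
          rw [hl'f, Finset.mem_symmDiff] at this
          rcases this with ⟨hm, -⟩ | ⟨hm, -⟩
          · rw [Finset.mem_singleton] at hm; exact hm ▸ hgt
          · exact hj b (List.mem_toFinset.mp hm)
        · rw [List.toFinset_cons, List.toFinset_cons, hl'f, symm3 (Ne.symm hij) hjt]
        · rw [List.map_cons, List.prod_cons, ← mul_assoc, gen_comm ε hij, neg_mul,
            mul_assoc, hl'e, mul_smul_comm, ← neg_smul, List.map_cons, List.prod_cons]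

lemma prod_mul_prod :
    ∀ (m : List (Fin n)), m.Nodup →
    ∀ (l : List (Fin n)), l.Pairwise (· < ·) →
    ∃ (c : ℝ) (l' : List (Fin n)), l'.Pairwise (· < ·) ∧
      l'.toFinset = symmDiff m.toFinset l.toFinset ∧
      ((m.map (gen ε)).prod) * ((l.map (gen ε)).prod) = c • ((l'.map (gen ε)).prod) := by
  intro m
  induction m with
  | nil => intro _ l hl; exact ⟨1, l, hl, by rw [List.toFinset_nil, ← Finset.bot_eq_empty, bot_symmDiff], by simp⟩
  | cons i t ih =>
    intro hnd l hl
    rw [List.nodup_cons] at hnd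
    obtain ⟨hit, htnd⟩ := hnd
    obtain ⟨c, l₁, h₁s, h₁f, h₁e⟩ := ih htnd l hl
    obtain ⟨c₂, l₂, h₂s, h₂f, h₂e⟩ := gen_mul_prod ε i l₁ h₁s
    refine ⟨c * c₂, l₂, h₂s, ?_, ?_⟩
    · rw [h₂f, h₁f, List.toFinset_cons, ← symm1 (by simpa using hit), symmDiff_assoc]
    · rw [List.map_cons, List.prod_cons, mul_assoc, h₁e, mul_smul_comm, h₂e, smul_smul]

lemma G_gen (G : CliffordAlgebra (Qe ε) →ₗ[ℝ] CliffordAlgebra (Qe ε))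
    (hGι : ∀ v : Fin n → ℝ, G (ι (Qe ε) v) = ι (Qe ε) (fun i => ε i * v i)) (i : Fin n) :
    G (gen ε i) = ε i • gen ε i := by
  rw [gen, hGι]
  have : (fun j => ε j * (Pi.single i 1 : Fin n → ℝ) j) = (ε i) • (Pi.single i 1 : Fin n → ℝ) := by
    funext j
    by_cases h : j = i
    · subst h; simp
    · simp [Pi.single_apply, h]
  rw [this, map_smul]

lemma G_prod (G : CliffordAlgebra (Qe ε) →ₗ[ℝ] CliffordAlgebra (Qe ε))
    (hG1 : G 1 = 1) (hGm : ∀ a b, G (a * b) = G b * G a)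
    (hGι : ∀ v : Fin n → ℝ, G (ι (Qe ε) v) = ι (Qe ε) (fun i => ε i * v i)) :
    ∀ l : List (Fin n),
      G ((l.map (gen ε)).prod) = (l.map ε).prod • ((l.reverse.map (gen ε)).prod) := by
  intro l
  induction l with
  | nil => simpa using hG1
  | cons i t ih =>
    rw [List.map_cons, List.prod_cons, hGm, ih, G_gen ε G hGι]
    simp only [List.reverse_cons, List.map_append, List.prod_append, List.map_cons,
      List.prod_cons, List.map_nil, List.prod_nil, mul_one]
    rw [smul_mul_assoc, mul_smul_comm, smul_smul, mul_comm (ε i) ((List.map ε t).prod)]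

lemma rev_mul_self :
    ∀ l : List (Fin n),
      ((l.reverse.map (gen ε)).prod) * ((l.map (gen ε)).prod) = (l.map ε).prod • 1 := by
  intro l
  induction l with
  | nil => simp
  | cons i t ih =>
    simp only [List.reverse_cons, List.map_append, List.prod_append, List.map_cons,
      List.prod_cons, List.map_nil, List.prod_nil, mul_one]
    rw [mul_assoc, ← mul_assoc (gen ε i), gen_sq, ← Algebra.smul_def, mul_smul_comm, ih,
      smul_smul]

lemma prod_eps_sq (hε : ∀ i, ε i = 1 ∨ ε i = -1) (l : List (Fin n)) :
    (l.map ε).prod * (l.map ε).prod = 1 := by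
  have : (l.map ε).prod = 1 ∨ (l.map ε).prod = -1 := by
    induction l with
    | nil => simp
    | cons i t ih =>
      rw [List.map_cons, List.prod_cons]
      rcases hε i with h | h <;> rcases ih with h' | h' <;> simp [h, h']
  rcases this with h | h <;> rw [h] <;> norm_num

lemma sorted_prod_eq {l : List (Fin n)} (hs : l.Pairwise (· < ·)) :
    ((l.map (gen ε)).prod) = eProd ε l.toFinset := by
  have h1 : l = l.toFinset.sort (· ≤ ·) :=
    List.Perm.eq_of_pairwise' (r := (· ≤ ·)) (hs.imp le_of_lt) (Finset.pairwise_sort _ _)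
      (List.perm_of_nodup_nodup_toFinset_eq hs.nodup (Finset.sort_nodup _ _)
        (Finset.sort_toFinset _ _).symm)
  rw [eProd, ← h1]

/-- `G(e_K) * e_J = c • e_{K ∆ J}`. -/
lemma G_eProd_mul (G : CliffordAlgebra (Qe ε) →ₗ[ℝ] CliffordAlgebra (Qe ε))
    (hG1 : G 1 = 1) (hGm : ∀ a b, G (a * b) = G b * G a)
    (hGι : ∀ v : Fin n → ℝ, G (ι (Qe ε) v) = ι (Qe ε) (fun i => ε i * v i))
    (K J : Finset (Fin n)) :
    ∃ c : ℝ, G (eProd ε K) * eProd ε J = c • eProd ε (symmDiff K J) := by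
  set lk := K.sort (· ≤ ·) with hlk
  have hrev : lk.reverse.Nodup := by
    rw [List.nodup_reverse]; exact Finset.sort_nodup _ _
  obtain ⟨c, l', h's, h'f, h'e⟩ :=
    prod_mul_prod ε lk.reverse hrev (J.sort (· ≤ ·)) (Finset.sortedLT_sort J).pairwise
  refine ⟨(lk.map ε).prod * c, ?_⟩
  rw [eProd, ← hlk, G_prod ε G hG1 hGm hGι, smul_mul_assoc, eProd, h'e,
    smul_smul, sorted_prod_eq ε h's]
  congr 2
  rw [h'f, List.toFinset_reverse, Finset.sort_toFinset, Finset.sort_toFinset]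

/-- `G(e_K) * e_K = 1`. -/
lemma G_eProd_mul_self (hε : ∀ i, ε i = 1 ∨ ε i = -1)
    (G : CliffordAlgebra (Qe ε) →ₗ[ℝ] CliffordAlgebra (Qe ε))
    (hG1 : G 1 = 1) (hGm : ∀ a b, G (a * b) = G b * G a)
    (hGι : ∀ v : Fin n → ℝ, G (ι (Qe ε) v) = ι (Qe ε) (fun i => ε i * v i))
    (K : Finset (Fin n)) :
    G (eProd ε K) * eProd ε K = 1 := by
  rw [eProd, G_prod ε G hG1 hGm hGι, smul_mul_assoc, rev_mul_self, smul_smul,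
    prod_eps_sq ε hε, one_smul]

end Stmt12Aux

open Stmt12Aux

/-- relative to the basis of Grassmann monomials, the matrix of
`L_{Tp_ε(u)}` is the transpose of the matrix of `L_u`. -/
theorem stmt12 {n : ℕ} (ε : Fin n → ℝ) (hε : ∀ i, ε i = 1 ∨ ε i = -1)
    -- the basis of Grassmann monomials `e_I`
    (bB : Module.Basis (Finset (Fin n)) ℝ (CliffordAlgebra (Qe ε)))
    (hbB : ∀ I, bB I = eProd ε I)
    -- `Tp_ε`: the anti-involution determined by `Tp_ε(eᵢ) = εᵢeᵢ`
    (G : CliffordAlgebra (Qe ε) →ₗ[ℝ] CliffordAlgebra (Qe ε))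
    (hG1 : G 1 = 1) (hGm : ∀ a b, G (a * b) = G b * G a)
    (hGι : ∀ v : Fin n → ℝ, G (ι (Qe ε) v) = ι (Qe ε) (fun i => ε i * v i)) :
    ∀ u : CliffordAlgebra (Qe ε),
      Matrix.transpose (LinearMap.toMatrix bB bB (LinearMap.mulLeft ℝ u))
        = LinearMap.toMatrix bB bB (LinearMap.mulLeft ℝ (G u)) := by
  -- the "scalar part" functional τ = coefficient of e_∅
  set τ : CliffordAlgebra (Qe ε) →ₗ[ℝ] ℝ := bB.coord ∅ with hτ
  have hτ1 : τ (1 : CliffordAlgebra (Qe ε)) = 1 := by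
    have h1 : (1 : CliffordAlgebra (Qe ε)) = bB ∅ := by
      rw [hbB]; simp [eProd]
    rw [h1, hτ, Module.Basis.coord_apply, Module.Basis.repr_self, Finsupp.single_eq_same]
  have hτB : ∀ S : Finset (Fin n), S ≠ ∅ → τ (eProd ε S) = 0 := by
    intro S hS
    rw [← hbB, hτ, Module.Basis.coord_apply, Module.Basis.repr_self, Finsupp.single_apply,
      if_neg hS]
  -- τ(G(e_K) e_J) = δ_{KJ}
  have hdelta : ∀ K J : Finset (Fin n),
      τ (G (eProd ε K) * eProd ε J) = if K = J then 1 else 0 := by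
    intro K J
    by_cases h : K = J
    · rw [if_pos h, h, G_eProd_mul_self ε hε G hG1 hGm hGι, hτ1]
    · rw [if_neg h]
      obtain ⟨c, hc⟩ := G_eProd_mul ε G hG1 hGm hGι K J
      rw [hc, map_smul, hτB (symmDiff K J) (by
        intro hKJ
        exact h (symmDiff_eq_bot.mp (by simpa using hKJ))), smul_zero]
  -- repr formula: bB.repr x J = τ(G(e_J) * x)
  have hrepr : ∀ (J : Finset (Fin n)) (x : CliffordAlgebra (Qe ε)),
      bB.repr x J = τ (G (bB J) * x) := by
    intro J
    have : (bB.coord J) =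
        τ.comp (LinearMap.mulLeft ℝ (G (bB J))) := by
      apply Module.Basis.ext bB
      intro K
      rw [Module.Basis.coord_apply, Module.Basis.repr_self, Finsupp.single_apply,
        LinearMap.comp_apply, LinearMap.mulLeft_apply, hbB, hbB, hdelta]
      by_cases h : J = K
      · simp [h]
      · simp [h, Ne.symm h]
    intro x
    simpa [Module.Basis.coord_apply] using LinearMap.congr_fun this x
  -- symmetry: τ(G a * e_J) = τ(G e_J * a)
  have hsymm : ∀ (J : Finset (Fin n)) (a : CliffordAlgebra (Qe ε)),
      τ (G a * bB J) = τ (G (bB J) * a) := by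
    intro J
    have : τ.comp ((LinearMap.mulRight ℝ (bB J)).comp G) =
        τ.comp (LinearMap.mulLeft ℝ (G (bB J))) := by
      apply Module.Basis.ext bB
      intro K
      simp only [LinearMap.comp_apply, LinearMap.mulRight_apply, LinearMap.mulLeft_apply]
      rw [hbB, hbB, hdelta, hdelta]
      by_cases h : K = J
      · simp [h]
      · simp [h, Ne.symm h]
    intro a
    simpa using LinearMap.congr_fun this a
  intro u
  ext I J
  rw [Matrix.transpose_apply, LinearMap.toMatrix_apply, LinearMap.toMatrix_apply,
    LinearMap.mulLeft_apply, LinearMap.mulLeft_apply, hrepr, hrepr]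
  rw [← mul_assoc (G (bB I)), ← hGm u (bB I), hsymm J (u * bB I)]
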